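/- Let Q⁰ ∈ 𝔻 and let α = (α_Q)_{Q ∈ 𝔻_{Q⁰}} be nonnegative numbers. Given M₁ > 0 and K₁ ≥ 1, assume that for every Q₀ ∈ 𝔻_{Q⁰} there exists a pairwise disjoint family 𝓕_{Q₀} = {Q_j} ⊆ 𝔻_{Q₀} ∖ {Q₀} such that μ( Q₀ ∖ ⋃_j Q_j ) ≥ K₁^{-1} μ(Q₀) and 𝔪_α(𝔻_{𝓕_{Q₀}, Q₀}) ≤ M₁ μ(Q₀). Then 𝔪_α(𝔻_Q) ≤ K₁ M₁ μ(Q) for every Q ∈ 𝔻_{Q⁰}; that is, 𝔪_α is a discrete Carleson measure on 𝔻_{Q⁰} with norm at most K₁M₁. -/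

import Mathlib

open MeasureTheory Set
open scoped ENNReal

noncomputable section

/-- the discrete Carleson measure criterion via sawtooth families.
A dyadic system on a measure space `(S,μ)` is modelled by a countable index type
`ι`, cubes `Q : ι → Set S` and generations `gen : ι → ℤ`, with: cubes of equal
generation equal or disjoint, and a cube of later generation either contained in
or disjoint from a cube of earlier generation. For a cube `i`, the discretized
Carleson region is `𝔻_i = {k | Q k ⊆ Q i ∧ gen i ≤ gen k}`; for a pairwise
disjoint family `F ⊆ 𝔻_{i} ∖ {i}`, `𝔻_{F,i} = 𝔻_i ∖ ⋃_{j ∈ F} 𝔻_j`, and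
`𝔪_a(𝔻') = ∑_{k ∈ 𝔻'} a k`.
If for every `i ∈ 𝔻_{i₀}` there is such a family `F` with
`μ(Q i ∖ ⋃_{j∈F} Q j) ≥ K₁⁻¹ μ(Q i)` and `𝔪_a(𝔻_{F,i}) ≤ M₁ μ(Q i)`, then
`𝔪_a(𝔻_i) ≤ K₁ M₁ μ(Q i)` for every `i ∈ 𝔻_{i₀}`. -/
theorem statement14 {S ι : Type*} [MeasurableSpace S] [Countable ι]
    (μ : Measure S) (Q : ι → Set S) (gen : ι → ℤ)
    (hmeas : ∀ i, MeasurableSet (Q i))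
    (hpos : ∀ i, 0 < μ (Q i)) (hfin : ∀ i, μ (Q i) < ∞)
    (hsame : ∀ i j, gen i = gen j → Q i = Q j ∨ Disjoint (Q i) (Q j))
    (hnest : ∀ i j, gen j ≤ gen i → Q i ⊆ Q j ∨ Disjoint (Q i) (Q j))
    (a : ι → ℝ≥0∞) (i₀ : ι) (M₁ K₁ : ℝ≥0∞) (hM₁ : 0 < M₁) (hK₁ : 1 ≤ K₁)
    (hyp : ∀ i, Q i ⊆ Q i₀ → gen i₀ ≤ gen i →
      ∃ F : Set ι,
        (∀ j ∈ F, Q j ⊆ Q i ∧ gen i ≤ gen j ∧ j ≠ i) ∧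
        F.PairwiseDisjoint Q ∧
        K₁⁻¹ * μ (Q i) ≤ μ (Q i \ ⋃ j ∈ F, Q j) ∧
        ∑' k : {k : ι // Q k ⊆ Q i ∧ gen i ≤ gen k ∧
            ∀ j ∈ F, ¬(Q k ⊆ Q j ∧ gen j ≤ gen k)}, a k.1 ≤ M₁ * μ (Q i)) :
    ∀ i, Q i ⊆ Q i₀ → gen i₀ ≤ gen i →
      ∑' k : {k : ι // Q k ⊆ Q i ∧ gen i ≤ gen k}, a k.1 ≤ K₁ * M₁ * μ (Q i) := by
  classical
  intro i hi hgi
  rcases eq_or_ne K₁ ∞ with hK | hK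
  · have : K₁ * M₁ * μ (Q i) = ∞ := by
      rw [hK, ENNReal.top_mul hM₁.ne', ENNReal.top_mul (hpos i).ne']
    simp [this]
  have hK0 : K₁ ≠ 0 := (zero_lt_one.trans_le hK₁).ne'
  set C := K₁ * M₁ with hC
  -- truncated claim
  have key : ∀ N : ℕ, ∀ i, Q i ⊆ Q i₀ → gen i₀ ≤ gen i →
      ∑' k : ι, ({k : ι | Q k ⊆ Q i ∧ gen i ≤ gen k ∧ gen k < gen i + N}).indicator a k
        ≤ C * μ (Q i) := by
    intro N
    induction N with
    | zero =>
      intro i hi hgi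
      have he : ({k : ι | Q k ⊆ Q i ∧ gen i ≤ gen k ∧ gen k < gen i + (0 : ℕ)} : Set ι) = ∅ := by
        ext k
        simp only [mem_setOf_eq, mem_empty_iff_false, iff_false, not_and]
        intro _ h1 h2
        omega
      simp [he]
    | succ N ih =>
      intro i hi hgi
      obtain ⟨F, hF, hFdisj, hFmeas, hFsum⟩ := hyp i hi hgi
      set U : Set S := ⋃ j ∈ F, Q j with hUdef
      have hFc : F.Countable := F.to_countable
      have hUmeas : MeasurableSet U := MeasurableSet.biUnion hFc fun j _ => hmeas j
      have hUsub : U ⊆ Q i := iUnion₂_subset fun j hj => (hF j hj).1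
      -- every j ∈ F has strictly larger generation
      have hFgen : ∀ j ∈ F, gen i + 1 ≤ gen j := by
        intro j hj
        obtain ⟨hQj, hgj, hne⟩ := hF j hj
        by_contra h
        have hgeq : gen i = gen j := by omega
        rcases hsame i j hgeq with heq | hdisj
        · -- Q i = Q j, so Q i \ U = ∅, contradicting the measure bound
          have hsub : Q i \ U ⊆ (∅ : Set S) := by
            intro x hx
            have hxj : x ∈ Q j := by rw [← heq]; exact hx.1
            exact absurd (mem_biUnion hj hxj) hx.2
          have h0 : μ (Q i \ U) = 0 := measure_mono_null hsub measure_empty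
          have hpos' : K₁⁻¹ * μ (Q i) ≠ 0 :=
            mul_ne_zero (ENNReal.inv_ne_zero.mpr hK) (hpos i).ne'
          exact hpos' (le_antisymm (h0 ▸ hFmeas) zero_le)
        · obtain ⟨x, hx⟩ := nonempty_of_measure_ne_zero (hpos j).ne'
          exact (disjoint_left.mp hdisj (hQj hx)) hx
      -- measure inequality : μ U + K₁⁻¹ μ(Q i) ≤ μ (Q i)
      have hUle : μ U + K₁⁻¹ * μ (Q i) ≤ μ (Q i) := by
        have h1 : μ (Q i ∩ U) + μ (Q i \ U) = μ (Q i) := measure_inter_add_diff _ hUmeas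
        rw [inter_eq_self_of_subset_right hUsub] at h1
        calc μ U + K₁⁻¹ * μ (Q i) ≤ μ U + μ (Q i \ U) := add_le_add_right hFmeas _
          _ = μ (Q i) := h1
      set G : Set ι := {k : ι | Q k ⊆ Q i ∧ gen i ≤ gen k ∧
          ∀ j ∈ F, ¬(Q k ⊆ Q j ∧ gen j ≤ gen k)} with hGdef
      set T : ι → Set ι := fun j => {k : ι | Q k ⊆ Q j ∧ gen j ≤ gen k ∧ gen k < gen j + N}
        with hTdef
      -- pointwise cover
      have hcov : ∀ k : ι,
          ({k : ι | Q k ⊆ Q i ∧ gen i ≤ gen k ∧ gen k < gen i + (N + 1 : ℕ)}).indicator a k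
            ≤ G.indicator a k + ∑' (j : F), (T j.1).indicator a k := by
        intro k
        by_cases hk : k ∈ {k : ι | Q k ⊆ Q i ∧ gen i ≤ gen k ∧ gen k < gen i + (N + 1 : ℕ)}
        · rw [indicator_of_mem hk]
          obtain ⟨hk1, hk2, hk3⟩ := hk
          by_cases hg : ∀ j ∈ F, ¬(Q k ⊆ Q j ∧ gen j ≤ gen k)
          · have hkG : k ∈ G := by
              simp only [hGdef, mem_setOf_eq]
              exact ⟨hk1, hk2, hg⟩
            rw [(indicator_of_mem hkG a).symm]; exact le_self_add
          · push_neg at hg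
            obtain ⟨j, hj, hkj1, hkj2⟩ := hg
            have hjgen := hFgen j hj
            have hkT : k ∈ T j := by
              simp only [hTdef, mem_setOf_eq]
              refine ⟨hkj1, hkj2, ?_⟩
              push_cast at hk3
              omega
            have h1 : a k = (T j).indicator a k := (indicator_of_mem hkT a).symm
            have h2 : (T j).indicator a k ≤ ∑' (j' : F), (T j'.1).indicator a k :=
              ENNReal.le_tsum (⟨j, hj⟩ : F)
            exact le_add_left (h1 ▸ h2)
        · rw [indicator_of_notMem hk]
          exact zero_le
      calc ∑' k : ι, ({k : ι | Q k ⊆ Q i ∧ gen i ≤ gen k ∧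
              gen k < gen i + (N + 1 : ℕ)}).indicator a k
          ≤ ∑' k : ι, (G.indicator a k + ∑' (j : F), (T j.1).indicator a k) :=
            ENNReal.tsum_le_tsum hcov
        _ = (∑' k : ι, G.indicator a k) + ∑' k : ι, ∑' (j : F), (T j.1).indicator a k :=
            ENNReal.tsum_add
        _ = (∑' k : ι, G.indicator a k) + ∑' (j : F), ∑' k : ι, (T j.1).indicator a k := by
            rw [ENNReal.tsum_comm]
        _ ≤ M₁ * μ (Q i) + ∑' (j : F), C * μ (Q j.1) := by
            refine add_le_add ?_ (ENNReal.tsum_le_tsum fun j => ?_)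
            · rw [← tsum_subtype G a]
              exact hFsum
            · exact ih j.1 ((hF j.1 j.2).1.trans hi) (hgi.trans (hF j.1 j.2).2.1)
        _ = M₁ * μ (Q i) + C * μ U := by
            rw [ENNReal.tsum_mul_left, hUdef,
              measure_biUnion hFc hFdisj fun j _ => hmeas j]
        _ = C * (μ U + K₁⁻¹ * μ (Q i)) := by
            rw [mul_add, ← mul_assoc, hC]
            rw [show K₁ * M₁ * K₁⁻¹ = M₁ * (K₁ * K₁⁻¹) by ring,
              ENNReal.mul_inv_cancel hK0 hK, mul_one, add_comm]
        _ ≤ C * μ (Q i) := mul_le_mul_right hUle _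
  -- pass to the limit
  have hsub : (∑' k : {k : ι // Q k ⊆ Q i ∧ gen i ≤ gen k}, a k.1)
      = ∑' k : ι, ({k : ι | Q k ⊆ Q i ∧ gen i ≤ gen k}).indicator a k :=
    tsum_subtype _ a
  rw [hsub, ENNReal.tsum_eq_iSup_sum]
  refine iSup_le fun s => ?_
  set N : ℕ := (s.sup fun k => (gen k - gen i).toNat) + 1 with hNdef
  have hle : ∀ k ∈ s, ({k : ι | Q k ⊆ Q i ∧ gen i ≤ gen k}).indicator a k
      ≤ ({k : ι | Q k ⊆ Q i ∧ gen i ≤ gen k ∧ gen k < gen i + N}).indicator a k := by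
    intro k hk
    by_cases hkS : k ∈ {k : ι | Q k ⊆ Q i ∧ gen i ≤ gen k}
    · have h1 := hkS.1
      have h2 := hkS.2
      have hsup : (gen k - gen i).toNat ≤ s.sup fun k => (gen k - gen i).toNat :=
        Finset.le_sup (f := fun k => (gen k - gen i).toNat) hk
      have hbound : gen k < gen i + N := by
        have := Int.toNat_of_nonneg (sub_nonneg.mpr h2)
        push_cast [hNdef]
        omega
      rw [indicator_of_mem hkS]
      exact le_of_eq (indicator_of_mem (show k ∈ {k : ι | Q k ⊆ Q i ∧ gen i ≤ gen k ∧
        gen k < gen i + N} from ⟨h1, h2, hbound⟩) a).symm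
    · rw [indicator_of_notMem hkS]
      exact zero_le
  calc ∑ k ∈ s, ({k : ι | Q k ⊆ Q i ∧ gen i ≤ gen k}).indicator a k
      ≤ ∑ k ∈ s, ({k : ι | Q k ⊆ Q i ∧ gen i ≤ gen k ∧ gen k < gen i + N}).indicator a k :=
        Finset.sum_le_sum hle
    _ ≤ ∑' k : ι, ({k : ι | Q k ⊆ Q i ∧ gen i ≤ gen k ∧ gen k < gen i + N}).indicator a k :=
        ENNReal.sum_le_tsum s
    _ ≤ K₁ * M₁ * μ (Q i) := key N i hi hgi
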